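/- Let ℓ, n be integers with 2 ≤ ℓ ≤ n, and let p₁, …, p_ℓ ∈ ℝⁿ be points in general position. Then the distance-squared mapping D_{(p₁,…,p_ℓ)} : ℝⁿ → ℝ^ℓ is A-equivalent to the normal form of definite fold mappings Φ_ℓ. -/

import Mathlib

/-- A `C^∞` diffeomorphism of a normed space onto itself. -/
def IsSmoothDiffeo {E : Type*} [NormedAddCommGroup E] [NormedSpace ℝ E] (φ : E → E) : Prop :=
  ContDiff ℝ (⊤ : ℕ∞) φ ∧
    ∃ φi : E → E, ContDiff ℝ (⊤ : ℕ∞) φi ∧ (∀ x, φi (φ x) = x) ∧ (∀ y, φ (φi y) = y)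

/-- `f` and `g` are `𝒜`-equivalent: `ψ ∘ f ∘ φ = g` for some `C^∞` diffeomorphisms
`φ` of the source and `ψ` of the target. -/
def AEquiv {E F : Type*} [NormedAddCommGroup E] [NormedSpace ℝ E]
    [NormedAddCommGroup F] [NormedSpace ℝ F] (f g : E → F) : Prop :=
  ∃ (φ : E → E) (ψ : F → F), IsSmoothDiffeo φ ∧ IsSmoothDiffeo ψ ∧ ψ ∘ f ∘ φ = g

/-- The distance-squared mapping `D_{(p₁,…,p_ℓ)} : ℝⁿ → ℝ^ℓ`,
`x ↦ (|x-p₁|², …, |x-p_ℓ|²)` (Euclidean norm). -/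
def distSqMap {n ℓ : ℕ} (p : Fin ℓ → (Fin n → ℝ)) (x : Fin n → ℝ) : Fin ℓ → ℝ :=
  fun i => ∑ j, (x j - p i j) ^ 2

open RealInnerProductSpace

private lemma sum_eq_sum_castLE {n m : ℕ} (h : m ≤ n) (f : Fin n → ℝ)
    (hf : ∀ i : Fin n, m ≤ (i : ℕ) → f i = 0) :
    ∑ i, f i = ∑ k : Fin m, f (Fin.castLE h k) := by
  classical
  have h1 : ∑ k : Fin m, f (Fin.castLE h k)
      = ∑ i ∈ Finset.univ.map ⟨Fin.castLE h, Fin.castLE_injective h⟩, f i := by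
    rw [Finset.sum_map]; rfl
  rw [h1]
  refine (Finset.sum_subset (Finset.subset_univ _) ?_).symm
  intro i _ hi
  refine hf i ?_
  by_contra hlt
  push_neg at hlt
  exact hi (Finset.mem_map.mpr ⟨⟨(i : ℕ), hlt⟩, Finset.mem_univ _, by simp [Fin.ext_iff]⟩)

/-- The linear target change determined by the matrix of inner products. -/
private noncomputable def auxU {m : ℕ} (M : Fin m → Fin m → ℝ) :
    (Fin (m+1) → ℝ) →ₗ[ℝ] (Fin (m+1) → ℝ) where
  toFun ξ := Fin.cons (ξ (Fin.last m))
    (fun j => ξ (Fin.last m) - 2 * ∑ k, M j k * ξ (Fin.castSucc k))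
  map_add' a c := by
    funext i
    induction i using Fin.cases with
    | zero => simp
    | succ j =>
      simp only [Fin.cons_succ, Pi.add_apply, mul_add, Finset.sum_add_distrib]
      ring
  map_smul' r a := by
    funext i
    induction i using Fin.cases with
    | zero => simp
    | succ j =>
      have h : ∀ k : Fin m, M j k * (r * a (Fin.castSucc k))
          = r * (M j k * a (Fin.castSucc k)) := fun k => by ring
      simp only [Fin.cons_succ, Pi.smul_apply, smul_eq_mul, RingHom.id_apply, h,
        ← Finset.mul_sum]
      ring

private lemma auxU_apply_zero {m : ℕ} (M : Fin m → Fin m → ℝ) (ξ : Fin (m+1) → ℝ) :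
    auxU M ξ 0 = ξ (Fin.last m) := by
  simp only [auxU, LinearMap.coe_mk, AddHom.coe_mk, Fin.cons_zero]

private lemma auxU_apply_succ {m : ℕ} (M : Fin m → Fin m → ℝ) (ξ : Fin (m+1) → ℝ)
    (j : Fin m) :
    auxU M ξ j.succ = ξ (Fin.last m) - 2 * ∑ k, M j k * ξ (Fin.castSucc k) := by
  simp only [auxU, LinearMap.coe_mk, AddHom.coe_mk, Fin.cons_succ]

/-- The shear on the target. -/
private def auxSh (m : ℕ) (z : Fin (m+1) → ℝ) : Fin (m+1) → ℝ :=
  fun i => if (i : ℕ) < m then z i else z i - ∑ k : Fin m, z (Fin.castSucc k) ^ 2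

private def auxShInv (m : ℕ) (z : Fin (m+1) → ℝ) : Fin (m+1) → ℝ :=
  fun i => if (i : ℕ) < m then z i else z i + ∑ k : Fin m, z (Fin.castSucc k) ^ 2

private lemma auxSh_castSucc {m : ℕ} (z : Fin (m+1) → ℝ) (k : Fin m) :
    auxSh m z (Fin.castSucc k) = z (Fin.castSucc k) := if_pos k.isLt

private lemma auxShInv_castSucc {m : ℕ} (z : Fin (m+1) → ℝ) (k : Fin m) :
    auxShInv m z (Fin.castSucc k) = z (Fin.castSucc k) := if_pos k.isLt

private lemma auxShInv_auxSh {m : ℕ} (z : Fin (m+1) → ℝ) :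
    auxShInv m (auxSh m z) = z := by
  funext i
  by_cases hi : (i : ℕ) < m
  · simp [auxShInv, auxSh, hi]
  · simp only [auxShInv, if_neg hi, auxSh_castSucc]
    simp only [auxSh, if_neg hi]
    ring

private lemma auxSh_auxShInv {m : ℕ} (z : Fin (m+1) → ℝ) :
    auxSh m (auxShInv m z) = z := by
  funext i
  by_cases hi : (i : ℕ) < m
  · simp [auxShInv, auxSh, hi]
  · simp only [auxSh, if_neg hi, auxShInv_castSucc]
    simp only [auxShInv, if_neg hi]
    ring

private lemma contDiff_auxSh (m : ℕ) : ContDiff ℝ (⊤ : ℕ∞) (auxSh m) := by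
  apply contDiff_pi.mpr
  intro i
  by_cases hi : (i : ℕ) < m
  · simpa [auxSh, hi] using (contDiff_pi.mp contDiff_id i)
  · simp only [auxSh, if_neg hi]
    exact (contDiff_pi.mp contDiff_id i).sub
      (ContDiff.sum fun k _ => (contDiff_pi.mp contDiff_id _).pow 2)

private lemma contDiff_auxShInv (m : ℕ) : ContDiff ℝ (⊤ : ℕ∞) (auxShInv m) := by
  apply contDiff_pi.mpr
  intro i
  by_cases hi : (i : ℕ) < m
  · simpa [auxShInv, hi] using (contDiff_pi.mp contDiff_id i)
  · simp only [auxShInv, if_neg hi]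
    exact (contDiff_pi.mp contDiff_id i).add
      (ContDiff.sum fun k _ => (contDiff_pi.mp contDiff_id _).pow 2)

private lemma isSmoothDiffeo_target {m : ℕ}
    (T : (Fin (m+1) → ℝ) ≃ₗ[ℝ] (Fin (m+1) → ℝ)) (c : Fin (m+1) → ℝ) :
    IsSmoothDiffeo (fun y => auxSh m (T.symm (y - c))) := by
  refine ⟨?_, fun z => T (auxShInv m z) + c, ?_, ?_, ?_⟩
  · exact (contDiff_auxSh m).comp
      ((LinearMap.toContinuousLinearMap
        (T.symm : (Fin (m+1) → ℝ) →ₗ[ℝ] (Fin (m+1) → ℝ))).contDiff.comp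
        (contDiff_id.sub contDiff_const))
  · exact ((LinearMap.toContinuousLinearMap
      (T : (Fin (m+1) → ℝ) →ₗ[ℝ] (Fin (m+1) → ℝ))).contDiff.comp
        (contDiff_auxShInv m)).add contDiff_const
  · intro y
    show T (auxShInv m (auxSh m (T.symm (y - c)))) + c = y
    rw [auxShInv_auxSh, T.apply_symm_apply]
    abel
  · intro z
    show auxSh m (T.symm (T (auxShInv m z) + c - c)) = z
    have h : T (auxShInv m z) + c - c = T (auxShInv m z) := by abel
    rw [h, T.symm_apply_apply, auxSh_auxShInv]

private lemma isSmoothDiffeo_source {n : ℕ}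
    (b : OrthonormalBasis (Fin n) ℝ (EuclideanSpace ℝ (Fin n)))
    (q : EuclideanSpace ℝ (Fin n)) :
    IsSmoothDiffeo (fun x : Fin n → ℝ =>
      WithLp.equiv 2 (Fin n → ℝ) (q + b.repr.symm ((WithLp.equiv 2 (Fin n → ℝ)).symm x))) := by
  refine ⟨?_, fun y =>
      WithLp.equiv 2 (Fin n → ℝ) (b.repr ((WithLp.equiv 2 (Fin n → ℝ)).symm y - q)),
      ?_, ?_, ?_⟩
  · exact (PiLp.continuousLinearEquiv 2 ℝ (fun _ : Fin n => ℝ)).contDiff.comp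
      ((contDiff_const.add b.repr.symm.contDiff).comp
        (PiLp.continuousLinearEquiv 2 ℝ (fun _ : Fin n => ℝ)).symm.contDiff)
  · exact (PiLp.continuousLinearEquiv 2 ℝ (fun _ : Fin n => ℝ)).contDiff.comp
      (b.repr.contDiff.comp
        ((PiLp.continuousLinearEquiv 2 ℝ (fun _ : Fin n => ℝ)).symm.contDiff.sub
          contDiff_const))
  · intro x
    show WithLp.equiv 2 (Fin n → ℝ) (b.repr ((WithLp.equiv 2 (Fin n → ℝ)).symm
        (WithLp.equiv 2 (Fin n → ℝ)
          (q + b.repr.symm ((WithLp.equiv 2 (Fin n → ℝ)).symm x))) - q)) = x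
    rw [Equiv.symm_apply_apply, add_sub_cancel_left, LinearIsometryEquiv.apply_symm_apply,
      Equiv.apply_symm_apply]
  · intro y
    show WithLp.equiv 2 (Fin n → ℝ) (q + b.repr.symm ((WithLp.equiv 2 (Fin n → ℝ)).symm
        (WithLp.equiv 2 (Fin n → ℝ) (b.repr ((WithLp.equiv 2 (Fin n → ℝ)).symm y - q))))) = y
    rw [Equiv.symm_apply_apply, LinearIsometryEquiv.symm_apply_apply]
    have h : q + ((WithLp.equiv 2 (Fin n → ℝ)).symm y - q)
        = (WithLp.equiv 2 (Fin n → ℝ)).symm y := by abel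
    rw [h, Equiv.apply_symm_apply]

/-- for `2 ≤ ℓ ≤ n` and `p₁,…,p_ℓ ∈ ℝⁿ` in general position, the
distance-squared mapping `D_{(p₁,…,p_ℓ)}` is `𝒜`-equivalent to the normal form of
definite fold mappings `Φ_ℓ(x₁,…,xₙ) = (x₁,…,x_{ℓ-1}, x_ℓ² + ⋯ + xₙ²)`. -/
theorem distSqMap_AEquiv_definite_fold {n ℓ : ℕ} (h2 : 2 ≤ ℓ) (hn : ℓ ≤ n)
    (p : Fin ℓ → (Fin n → ℝ))
    (hgen : LinearIndependent ℝ
      (fun j : Fin (ℓ - 1) =>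
        p ⟨(j : ℕ) + 1, by have := j.isLt; omega⟩ - p ⟨0, by omega⟩)) :
    AEquiv (distSqMap p)
      (fun (x : Fin n → ℝ) (j : Fin ℓ) =>
        if h : (j : ℕ) < ℓ - 1 then x ⟨(j : ℕ), by omega⟩
        else ∑ l ∈ Finset.univ.filter (fun l : Fin n => ℓ - 1 ≤ (l : ℕ)), x l ^ 2) := by
  obtain ⟨m, rfl⟩ : ∃ m, ℓ = m + 1 := ⟨ℓ - 1, by omega⟩
  have hm : m ≤ n := by omega
  classical
  -- points in Euclidean space
  set q : EuclideanSpace ℝ (Fin n) :=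
    (WithLp.equiv 2 (Fin n → ℝ)).symm (p ⟨0, by omega⟩) with hq_def
  set v : Fin m → EuclideanSpace ℝ (Fin n) :=
    fun j => (WithLp.equiv 2 (Fin n → ℝ)).symm (p ⟨(j : ℕ) + 1, by omega⟩) - q with hv_def
  have hv : LinearIndependent ℝ v := by
    have hgen' : LinearIndependent ℝ
        (fun j : Fin m => p ⟨(j : ℕ) + 1, by omega⟩ - p ⟨0, by omega⟩) := hgen
    have h := hgen'.map' (WithLp.linearEquiv 2 ℝ (Fin n → ℝ)).symm.toLinearMap
      (WithLp.linearEquiv 2 ℝ (Fin n → ℝ)).symm.ker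
    convert h using 1
    case e'_5 => rfl
    funext j
    simp [hv_def, hq_def, WithLp.coe_symm_linearEquiv]
  -- Gram-Schmidt and an adapted orthonormal basis
  haveI : WellFoundedLT (Fin m) := inferInstance
  obtain ⟨e, he, hspan⟩ : ∃ e : Fin m → EuclideanSpace ℝ (Fin n), Orthonormal ℝ e ∧
      Submodule.span ℝ (Set.range e) = Submodule.span ℝ (Set.range v) :=
    ⟨InnerProductSpace.gramSchmidtNormed ℝ v, InnerProductSpace.gramSchmidtNormed_orthonormal (𝕜 := ℝ) hv,
      (InnerProductSpace.span_gramSchmidtNormed_range (𝕜 := ℝ) v).trans (InnerProductSpace.span_gramSchmidt ℝ v)⟩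
  have hcard : Module.finrank ℝ (EuclideanSpace ℝ (Fin n)) = Fintype.card (Fin n) := by
    simp [finrank_euclideanSpace]
  set s : Set (Fin n) := {i : Fin n | (i : ℕ) < m} with hs_def
  set e' : Fin n → EuclideanSpace ℝ (Fin n) :=
    fun i => if h : (i : ℕ) < m then e ⟨(i : ℕ), h⟩ else 0 with he'_def
  have he' : Orthonormal ℝ (s.restrict e') := by
    have hre : s.restrict e' = e ∘ (fun i : s => (⟨((i : Fin n) : ℕ), i.2⟩ : Fin m)) := by
      funext i
      exact dif_pos i.2
    rw [hre]
    refine he.comp _ ?_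
    intro a c hac
    simp only [Fin.mk.injEq] at hac
    exact Subtype.ext (Fin.ext hac)
  obtain ⟨b, hb⟩ := he'.exists_orthonormalBasis_extension_of_card_eq hcard
  have hbe : ∀ k : Fin m, b (Fin.castLE hm k) = e k := by
    intro k
    have hk : (Fin.castLE hm k) ∈ s := k.isLt
    rw [hb _ hk]
    exact dif_pos k.isLt
  -- vectors b i for i ≥ m are orthogonal to the span of the v's
  have hbo : ∀ i : Fin n, m ≤ (i : ℕ) →
      ∀ w ∈ Submodule.span ℝ (Set.range v), ⟪b i, w⟫ = 0 := by
    intro i hi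
    have hmem : ∀ w ∈ Set.range e, ⟪b i, w⟫ = 0 := by
      rintro _ ⟨k, rfl⟩
      rw [← hbe k]
      refine b.orthonormal.2 ?_
      intro hik
      have hik' : (i : ℕ) = (k : ℕ) := congrArg Fin.val hik
      have := k.isLt
      omega
    intro w hw
    rw [← hspan] at hw
    refine Submodule.span_induction hmem (inner_zero_right _) ?_ ?_ hw
    · intro a c _ _ ha hc
      rw [inner_add_right, ha, hc, add_zero]
    · intro r a _ ha
      rw [real_inner_smul_right, ha, mul_zero]
  -- the matrix of inner products, and its injectivity
  set M : Fin m → Fin m → ℝ := fun j k => ⟪e k, v j⟫ with hM_def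
  have hMinj : ∀ ξ : Fin m → ℝ, (∀ j, ∑ k, M j k * ξ k = 0) → ξ = 0 := by
    intro ξ hξ
    have hu1 : ∀ j, ⟪∑ k, ξ k • e k, v j⟫ = 0 := by
      intro j
      rw [sum_inner, ← hξ j]
      refine Finset.sum_congr rfl fun k _ => ?_
      rw [real_inner_smul_left]
      ring
    have humem : (∑ k, ξ k • e k) ∈ Submodule.span ℝ (Set.range v) := by
      rw [← hspan]
      exact Submodule.sum_mem _ fun k _ =>
        Submodule.smul_mem _ _ (Submodule.subset_span ⟨k, rfl⟩)
    have huv : ∀ w ∈ Submodule.span ℝ (Set.range v), ⟪∑ k, ξ k • e k, w⟫ = 0 := by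
      intro w hw
      refine Submodule.span_induction ?_ (inner_zero_right _) ?_ ?_ hw
      · rintro _ ⟨j, rfl⟩
        exact hu1 j
      · intro a c _ _ ha hc
        rw [inner_add_right, ha, hc, add_zero]
      · intro r a _ ha
        rw [real_inner_smul_right, ha, mul_zero]
    have hu0 : (∑ k, ξ k • e k) = 0 := inner_self_eq_zero.mp (huv _ humem)
    funext k
    exact Fintype.linearIndependent_iff.mp he.linearIndependent ξ hu0 k
  -- the target linear equivalence
  have hUinj : Function.Injective (auxU M) := by
    rw [← LinearMap.ker_eq_bot]
    refine LinearMap.ker_eq_bot'.mpr ?_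
    intro ξ hξ
    have h0 : ξ (Fin.last m) = 0 := by
      have h := congrFun hξ 0
      rwa [auxU_apply_zero] at h
    have hcoords : (fun k : Fin m => ξ (Fin.castSucc k)) = 0 := by
      apply hMinj
      intro j
      have h := congrFun hξ j.succ
      rw [auxU_apply_succ, h0] at h
      have h' : (0 : ℝ) - 2 * ∑ k, M j k * ξ (Fin.castSucc k) = 0 := h
      linarith
    funext i
    induction i using Fin.lastCases with
    | last => exact h0
    | cast j => exact congrFun hcoords j
  set Ue : (Fin (m+1) → ℝ) ≃ₗ[ℝ] (Fin (m+1) → ℝ) :=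
    LinearEquiv.ofBijective (auxU M)
      ⟨hUinj, LinearMap.injective_iff_surjective.mp hUinj⟩ with hUe_def
  set c : Fin (m+1) → ℝ := Fin.cons 0 (fun j => ⟪v j, v j⟫) with hc_def
  refine ⟨_, _, isSmoothDiffeo_source b q, isSmoothDiffeo_target Ue c, ?_⟩
  funext x
  simp only [Function.comp_apply]
  -- abbreviations
  set w : EuclideanSpace ℝ (Fin n) :=
    b.repr.symm ((WithLp.equiv 2 (Fin n → ℝ)).symm x) with hw_def
  set ξ : Fin (m+1) → ℝ :=
    (Fin.snoc (fun k : Fin m => x (Fin.castLE hm k)) (∑ i, x i ^ 2) : Fin (m+1) → ℝ)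
    with hξ_def
  clear_value ξ
  -- the distance-squared map in inner-product form
  have hDval : ∀ (y : EuclideanSpace ℝ (Fin n)) (i : Fin (m+1)),
      distSqMap p (WithLp.equiv 2 (Fin n → ℝ) y) i
        = ⟪y - (WithLp.equiv 2 (Fin n → ℝ)).symm (p i),
            y - (WithLp.equiv 2 (Fin n → ℝ)).symm (p i)⟫ := by
    intro y i
    rw [PiLp.inner_apply]
    refine Finset.sum_congr rfl fun j _ => ?_
    have h1 : (y - (WithLp.equiv 2 (Fin n → ℝ)).symm (p i)) j = y j - p i j := rfl
    have h2 : (WithLp.equiv 2 (Fin n → ℝ) y) j = y j := rfl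
    show (WithLp.equiv 2 (Fin n → ℝ) y j - p i j) ^ 2 = _
    rw [h2, h1, RCLike.inner_apply, conj_trivial, sq]
  -- ⟪w, w⟫ is the sum of squares
  have hww : ⟪w, w⟫ = ∑ i, x i ^ 2 := by
    rw [hw_def, b.repr.symm.inner_map_map, PiLp.inner_apply]
    refine Finset.sum_congr rfl fun i _ => ?_
    rw [RCLike.inner_apply, conj_trivial, sq]
    rfl
  -- inner products with the v's
  have hwv : ∀ j : Fin m, ⟪w, v j⟫ = ∑ k, M j k * ξ (Fin.castSucc k) := by
    intro j
    rw [← b.repr.inner_map_map w (v j), hw_def, LinearIsometryEquiv.apply_symm_apply,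
      PiLp.inner_apply]
    have hzero : ∀ i : Fin n, m ≤ (i : ℕ) →
        (inner ℝ (((WithLp.equiv 2 (Fin n → ℝ)).symm x) i) ((b.repr (v j)) i) : ℝ) = 0 := by
      intro i hi
      have hb0 : (b.repr (v j)) i = 0 := by
        rw [b.repr_apply_apply]
        exact hbo i hi _ (Submodule.subset_span ⟨j, rfl⟩)
      rw [hb0, inner_zero_right]
    rw [sum_eq_sum_castLE hm _ hzero]
    refine Finset.sum_congr rfl fun k _ => ?_
    have hb1 : (b.repr (v j)) (Fin.castLE hm k) = M j k := by
      rw [b.repr_apply_apply, hbe k]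
    have hx2 : ξ (Fin.castSucc k) = x (Fin.castLE hm k) := by
      rw [hξ_def]
      exact Fin.snoc_castSucc _ _ _
    rw [hb1, hx2]
    show M j k * x (Fin.castLE hm k) = M j k * x (Fin.castLE hm k)
    ring
  -- the distance-squared map factors as claimed
  have hD : distSqMap p (WithLp.equiv 2 (Fin n → ℝ) (q + w)) = auxU M ξ + c := by
    funext i
    induction i using Fin.cases with
    | zero =>
      rw [hDval (q + w) 0]
      have hp0 : (WithLp.equiv 2 (Fin n → ℝ)).symm (p 0) = q := rfl
      rw [hp0, add_sub_cancel_left]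
      rw [Pi.add_apply, auxU_apply_zero]
      have hc0 : c 0 = 0 := by rw [hc_def]; exact Fin.cons_zero _ _
      rw [hc0, add_zero, hww, hξ_def, Fin.snoc_last]
    | succ j =>
      rw [hDval (q + w) j.succ]
      have hpj : (WithLp.equiv 2 (Fin n → ℝ)).symm (p j.succ) = v j + q := by
        have hvj : v j = (WithLp.equiv 2 (Fin n → ℝ)).symm (p j.succ) - q := rfl
        rw [hvj]
        abel
      rw [hpj]
      have hsub : q + w - (v j + q) = w - v j := by abel
      rw [hsub, real_inner_sub_sub_self, hww, hwv j]
      rw [Pi.add_apply, auxU_apply_succ]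
      have hcj : c j.succ = ⟪v j, v j⟫ := by rw [hc_def]; exact Fin.cons_succ _ _ _
      rw [hcj, hξ_def, Fin.snoc_last]
  rw [hD]
  have hcancel : auxU M ξ + c - c = auxU M ξ := by abel
  rw [hcancel]
  refine Eq.trans (congrArg (auxSh m) (Ue.symm_apply_apply ξ)) ?_
  -- final coordinate check
  funext i
  by_cases hi : (i : ℕ) < m
  · have hii : i = Fin.castSucc ⟨(i : ℕ), hi⟩ := Fin.ext rfl
    have hL : auxSh m ξ i = x ⟨(i : ℕ), by omega⟩ := by
      rw [show auxSh m ξ i = ξ i from if_pos hi]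
      conv_lhs => rw [hii]
      rw [hξ_def, Fin.snoc_castSucc]
      exact congrArg x (Fin.ext rfl)
    rw [hL]
    rw [dif_pos (show (i : ℕ) < m + 1 - 1 from hi)]
  · have hil : i = Fin.last m := Fin.ext (by have := i.isLt; simp; omega)
    have hL : auxSh m ξ i = (∑ i, x i ^ 2) - ∑ k : Fin m, x (Fin.castLE hm k) ^ 2 := by
      rw [show auxSh m ξ i = ξ i - ∑ k : Fin m, ξ (Fin.castSucc k) ^ 2 from if_neg hi]
      rw [hil, hξ_def, Fin.snoc_last]
      congr 1
      refine Finset.sum_congr rfl fun k _ => ?_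
      rw [Fin.snoc_castSucc]
    rw [hL, dif_neg (show ¬ (i : ℕ) < m + 1 - 1 from hi)]
    -- split the sum of squares
    have hsplit : ∑ i, x i ^ 2
        = (∑ l ∈ Finset.univ.filter (fun l : Fin n => m ≤ (l : ℕ)), x l ^ 2)
          + ∑ k : Fin m, x (Fin.castLE hm k) ^ 2 := by
      rw [← Finset.sum_filter_add_sum_filter_not Finset.univ
        (fun l : Fin n => m ≤ (l : ℕ)) (fun l => x l ^ 2)]
      congr 1
      rw [Finset.sum_filter]
      have h3 := sum_eq_sum_castLE hm (fun l => if (l : ℕ) < m then x l ^ 2 else 0)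
        (fun i hi' => if_neg (by omega))
      calc ∑ l : Fin n, (if ¬ m ≤ (l : ℕ) then x l ^ 2 else 0)
          = ∑ l : Fin n, (if (l : ℕ) < m then x l ^ 2 else 0) := by
            refine Finset.sum_congr rfl fun l _ => ?_
            by_cases h : (l : ℕ) < m
            · rw [if_pos h, if_pos (by omega)]
            · rw [if_neg h, if_neg (by omega)]
        _ = ∑ k : Fin m, (if ((Fin.castLE hm k : Fin n) : ℕ) < m
              then x (Fin.castLE hm k) ^ 2 else 0) := h3
        _ = ∑ k : Fin m, x (Fin.castLE hm k) ^ 2 := by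
            refine Finset.sum_congr rfl fun k _ => ?_
            exact if_pos k.isLt
    show (∑ i, x i ^ 2) - ∑ k : Fin m, x (Fin.castLE hm k) ^ 2
        = ∑ l ∈ Finset.univ.filter (fun l : Fin n => m ≤ (l : ℕ)), x l ^ 2
    rw [hsplit]
    ring
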